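/- Let p be prime and ξ ∈ ℚ_p with |ξ|_p = 1. Suppose λ > 0 and that integers a, b not divisible by p satisfy |b·ξ − a|_p ≤ M^{−1−λ}, where M = max(|a|, |b|) ≥ 1. Then for every n ≥ 1 and every j = 1, …, n, |b^n·ξ^j − a^j·b^{n−j}|_p ≤ (max(|a^n|, |b^n|))^{−(1+λ)/n}. Consequently λ_n(ξ) ≥ (1 + λ_1(ξ))/n − 1. -/

import Mathlib

open scoped ENNReal

def SimAt (p : ℕ) [Fact p.Prime] (n : ℕ) (ξ : ℚ_[p]) (lam X : ℝ) : Prop :=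
  ∃ x : ℕ → ℤ, (∀ i ≤ n, (|x i| : ℝ) ≤ X) ∧
    (∃ m, 1 ≤ m ∧ m ≤ n ∧ (x 0 : ℚ_[p]) * ξ ^ m ≠ (x m : ℚ_[p])) ∧
    (∀ m, 1 ≤ m → m ≤ n → ‖(x 0 : ℚ_[p]) * ξ ^ m - (x m : ℚ_[p])‖ ≤ X ^ (-lam - 1))

noncomputable def lambdaExp (p : ℕ) [Fact p.Prime] (n : ℕ) (ξ : ℚ_[p]) : ℝ≥0∞ :=
  sSup {l : ℝ≥0∞ | ∃ lam : ℝ, l = ENNReal.ofReal lam ∧ ∀ X₀ : ℝ, ∃ X, X₀ ≤ X ∧ SimAt p n ξ lam X}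

variable {p : ℕ} [Fact p.Prime]

lemma aux_pow_sub_pow (x y : ℚ_[p]) (hx : ‖x‖ ≤ 1) (hy : ‖y‖ ≤ 1) (j : ℕ) :
    ‖x ^ j - y ^ j‖ ≤ ‖x - y‖ := by
  induction j with
  | zero => simp
  | succ j ih =>
    have hrw : x ^ (j+1) - y ^ (j+1) = x * (x ^ j - y ^ j) + y ^ j * (x - y) := by ring
    rw [hrw]
    refine (Padic.nonarchimedean _ _).trans (max_le ?_ ?_)
    · rw [norm_mul]
      calc ‖x‖ * ‖x ^ j - y ^ j‖ ≤ 1 * ‖x - y‖ :=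
        mul_le_mul hx ih (norm_nonneg _) zero_le_one
      _ = ‖x - y‖ := one_mul _
    · rw [norm_mul, norm_pow]
      calc ‖y‖ ^ j * ‖x - y‖ ≤ 1 * ‖x - y‖ := by
            exact mul_le_mul (pow_le_one₀ (norm_nonneg _) hy) le_rfl (norm_nonneg _) zero_le_one
      _ = ‖x - y‖ := one_mul _

lemma aux_key (a b : ℤ) (ξ : ℚ_[p]) (hξ : ‖ξ‖ ≤ 1) (n j : ℕ) (hj : j ≤ n) :
    ‖((b ^ n : ℤ) : ℚ_[p]) * ξ ^ j - ((a ^ j * b ^ (n - j) : ℤ) : ℚ_[p])‖ ≤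
      ‖(b : ℚ_[p]) * ξ - (a : ℚ_[p])‖ := by
  have hb : (b : ℚ_[p]) ^ (n - j) * (b : ℚ_[p]) ^ j = (b : ℚ_[p]) ^ n := by
    rw [← pow_add, Nat.sub_add_cancel hj]
  have hrw : ((b ^ n : ℤ) : ℚ_[p]) * ξ ^ j - ((a ^ j * b ^ (n - j) : ℤ) : ℚ_[p]) =
      (b : ℚ_[p]) ^ (n - j) * (((b : ℚ_[p]) * ξ) ^ j - (a : ℚ_[p]) ^ j) := by
    push_cast
    rw [mul_pow, mul_sub, ← mul_assoc, hb]
    ring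
  rw [hrw, norm_mul]
  have h1 : ‖(b : ℚ_[p]) ^ (n - j)‖ ≤ 1 := by
    rw [norm_pow]
    exact pow_le_one₀ (norm_nonneg _) (Padic.norm_int_le_one _)
  have h2 : ‖((b : ℚ_[p]) * ξ) ^ j - (a : ℚ_[p]) ^ j‖ ≤ ‖(b : ℚ_[p]) * ξ - (a : ℚ_[p])‖ := by
    apply aux_pow_sub_pow
    · rw [norm_mul]
      exact mul_le_one₀ (Padic.norm_int_le_one _) (norm_nonneg _) hξ
    · exact Padic.norm_int_le_one _
  calc ‖(b : ℚ_[p]) ^ (n - j)‖ * ‖((b : ℚ_[p]) * ξ) ^ j - (a : ℚ_[p]) ^ j‖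
      ≤ 1 * ‖(b : ℚ_[p]) * ξ - (a : ℚ_[p])‖ :=
        mul_le_mul h1 h2 (norm_nonneg _) zero_le_one
    _ = _ := one_mul _

lemma aux_lift (ξ : ℚ_[p]) (hξ : ‖ξ‖ = 1) (lam : ℝ) (n : ℕ) (hn : 1 ≤ n)
    (H : ∀ X₀ : ℝ, ∃ X, X₀ ≤ X ∧ SimAt p 1 ξ lam X) :
    ∀ X₀ : ℝ, ∃ X, X₀ ≤ X ∧ SimAt p n ξ ((1 + lam) / n - 1) X := by
  intro X₀
  obtain ⟨X, hX, x, hbd, ⟨m, hm1, hm1', hne⟩, hnorm⟩ := H (max X₀ 1)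
  interval_cases m
  have hX1 : (1 : ℝ) ≤ X := le_trans (le_max_right _ _) hX
  have hX0 : (0 : ℝ) < X := lt_of_lt_of_le one_pos hX1
  refine ⟨X ^ n, ?_, fun j => (x 1) ^ j * (x 0) ^ (n - j), ?_, ?_, ?_⟩
  · calc X₀ ≤ X := le_trans (le_max_left _ _) hX
      _ ≤ X ^ n := le_self_pow₀ hX1 (by omega)
  · intro i hi
    push_cast [abs_mul, abs_pow]
    calc |(x 1 : ℝ)| ^ i * |(x 0 : ℝ)| ^ (n - i) ≤ X ^ i * X ^ (n - i) := by
          apply mul_le_mul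
          · exact pow_le_pow_left₀ (abs_nonneg _) (hbd 1 le_rfl) i
          · exact pow_le_pow_left₀ (abs_nonneg _) (hbd 0 (by omega)) _
          · positivity
          · positivity
      _ = X ^ n := by rw [← pow_add]; congr 1; omega
  · simp only [pow_one] at hne
    by_cases h0 : x 0 = 0
    · refine ⟨n, hn, le_rfl, ?_⟩
      have hx1 : x 1 ≠ 0 := by
        intro h1; apply hne; rw [h0, h1]; push_cast; ring
      simp only [h0, pow_zero, one_mul, Nat.sub_zero]
      push_cast
      rw [zero_pow (by omega), zero_mul]
      intro hc
      have hn0 : n ≠ 0 := by omega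
      have h1 : ((x 1 : ℚ_[p])) = 0 := by
        have h2 := hc.symm
        rw [Nat.sub_self, pow_zero, mul_one] at h2
        exact (pow_eq_zero_iff hn0).mp h2
      exact hx1 (by exact_mod_cast h1)
    · refine ⟨1, le_rfl, hn, ?_⟩
      simp only [pow_zero, one_mul, Nat.sub_zero, pow_one]
      intro hc
      apply hne
      have hx0 : ((x 0 : ℚ_[p])) ^ (n - 1) ≠ 0 := by
        apply pow_ne_zero; exact_mod_cast h0
      have hexp : ((x 0 : ℚ_[p])) ^ n = ((x 0 : ℚ_[p])) ^ (n - 1) * (x 0 : ℚ_[p]) := by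
        rw [← pow_succ]; congr 1; omega
      have hc2 : ((x 0 : ℚ_[p])) ^ (n-1) * ((x 0 : ℚ_[p]) * ξ) =
          ((x 0 : ℚ_[p])) ^ (n-1) * (x 1 : ℚ_[p]) := by
        push_cast at hc ⊢
        rw [← mul_assoc, ← hexp]
        rw [hc]; ring
      exact mul_left_cancel₀ hx0 hc2
  · intro m hm1 hmn
    have h1 : ‖(x 0 : ℚ_[p]) * ξ - (x 1 : ℚ_[p])‖ ≤ X ^ (-lam - 1) := by
      have := hnorm 1 le_rfl le_rfl
      simpa using this
    have hkey : ‖(((x 0) ^ n : ℤ) : ℚ_[p]) * ξ ^ m -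
        (((x 1) ^ m * (x 0) ^ (n - m) : ℤ) : ℚ_[p])‖ ≤ ‖(x 0 : ℚ_[p]) * ξ - (x 1 : ℚ_[p])‖ :=
      aux_key (x 1) (x 0) ξ (le_of_eq hξ) n m hmn
    have hrpow : (X ^ n : ℝ) ^ (-((1 + lam) / n - 1) - 1) = X ^ (-lam - 1) := by
      rw [← Real.rpow_natCast X n, ← Real.rpow_mul (le_of_lt hX0)]
      congr 1
      have hn' : (n : ℝ) ≠ 0 := Nat.cast_ne_zero.mpr (by omega)
      field_simp
      ring
    rw [hrpow]
    calc ‖((x 1) ^ 0 * (x 0) ^ (n - 0) : ℤ) * ξ ^ m - (((x 1) ^ m * (x 0) ^ (n - m) : ℤ) : ℚ_[p])‖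
        = ‖(((x 0) ^ n : ℤ) : ℚ_[p]) * ξ ^ m - (((x 1) ^ m * (x 0) ^ (n - m) : ℤ) : ℚ_[p])‖ := by
          norm_num
      _ ≤ X ^ (-lam - 1) := le_trans hkey h1


/-- From a good rational approximation `a/b` to `ξ` one gets good simultaneous approximations
to the powers of `ξ`; consequently `λ_n(ξ) ≥ (1 + λ_1(ξ))/n − 1`. -/
theorem stmt5 (p : ℕ) [Fact p.Prime] (ξ : ℚ_[p]) (hξ : ‖ξ‖ = 1) (lam : ℝ) (hlam : 0 < lam)
    (a b : ℤ) (ha : ¬ (p : ℤ) ∣ a) (hb : ¬ (p : ℤ) ∣ b) (M : ℝ)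
    (hM : M = max (|a| : ℝ) (|b| : ℝ)) (hM1 : 1 ≤ M)
    (h : ‖(b : ℚ_[p]) * ξ - (a : ℚ_[p])‖ ≤ M ^ (-1 - lam)) :
    (∀ n : ℕ, 1 ≤ n → ∀ j, 1 ≤ j → j ≤ n →
      ‖((b ^ n : ℤ) : ℚ_[p]) * ξ ^ j - ((a ^ j * b ^ (n - j) : ℤ) : ℚ_[p])‖ ≤
        (M ^ (n : ℕ)) ^ (-(1 + lam) / n)) ∧
    (∀ n : ℕ, 1 ≤ n → (1 + lambdaExp p 1 ξ) / n - 1 ≤ lambdaExp p n ξ) := by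
  constructor
  · intro n hn j hj1 hjn
    have hkey := aux_key a b ξ (le_of_eq hξ) n j hjn
    have hrpow : ((M ^ (n : ℕ) : ℝ)) ^ (-(1 + lam) / (n : ℝ)) = M ^ (-1 - lam) := by
      rw [← Real.rpow_natCast M n, ← Real.rpow_mul (by linarith : (0:ℝ) ≤ M)]
      congr 1
      have hn' : (n : ℝ) ≠ 0 := Nat.cast_ne_zero.mpr (by omega)
      field_simp
      ring
    rw [hrpow]
    exact hkey.trans h
  · intro n hn
    by_contra hcon
    push_neg at hcon
    obtain ⟨c, hc1, hc2⟩ := exists_between hcon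
    have hcne : c ≠ ⊤ := (hc2.trans_le le_top).ne
    have hne1 : ((1 : ℝ≥0∞)) ≠ ⊤ := ENNReal.one_ne_top
    have hnne0 : ((n : ℝ≥0∞)) ≠ 0 := by
      simp only [ne_eq, Nat.cast_eq_zero]; omega
    have hnnet : ((n : ℝ≥0∞)) ≠ ⊤ := ENNReal.natCast_ne_top n
    -- c + 1 < (1 + λ₁)/n
    have h1 : c + 1 < (1 + lambdaExp p 1 ξ) / (n : ℝ≥0∞) :=
      (ENNReal.cancel_of_ne hne1).lt_tsub_iff_right.mp hc2
    -- (c+1)*n < 1 + λ₁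
    have h2 : (c + 1) * (n : ℝ≥0∞) < 1 + lambdaExp p 1 ξ :=
      (ENNReal.lt_div_iff_mul_lt (Or.inl hnne0) (Or.inl hnnet)).mp h1
    have hge1 : (1 : ℝ≥0∞) ≤ (c + 1) * (n : ℝ≥0∞) := by
      calc (1 : ℝ≥0∞) = 1 * 1 := (one_mul 1).symm
        _ ≤ (c + 1) * (n : ℝ≥0∞) := by
            apply mul_le_mul' (le_add_self)
            exact_mod_cast Nat.one_le_cast.mpr hn
    have h3 : (c + 1) * (n : ℝ≥0∞) - 1 < lambdaExp p 1 ξ :=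
      ((ENNReal.cancel_of_ne hne1).tsub_lt_iff_left hge1).mpr h2
    rw [lambdaExp, lt_sSup_iff] at h3
    obtain ⟨l, ⟨lam₁, rfl, hprop⟩, hl⟩ := h3
    -- lam₁ > 0 since (c+1)*n - 1 ≥ 0
    have hlam₁pos : 0 < lam₁ := by
      by_contra hneg
      push_neg at hneg
      rw [ENNReal.ofReal_eq_zero.mpr hneg] at hl
      exact (not_lt_of_ge zero_le) hl
    -- (c+1)*n < ofReal lam₁ + 1
    have h4 : (c + 1) * (n : ℝ≥0∞) < ENNReal.ofReal lam₁ + 1 := by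
      calc (c + 1) * (n : ℝ≥0∞) = ((c + 1) * (n : ℝ≥0∞) - 1) + 1 :=
            (tsub_add_cancel_of_le hge1).symm
        _ < ENNReal.ofReal lam₁ + 1 := by
            exact ENNReal.add_lt_add_right hne1 hl
    have h5 : (c + 1) * (n : ℝ≥0∞) < ENNReal.ofReal (lam₁ + 1) := by
      rw [ENNReal.ofReal_add (le_of_lt hlam₁pos) zero_le_one, ENNReal.ofReal_one]
      exact h4
    have h6 : c + 1 < ENNReal.ofReal (lam₁ + 1) / (n : ℝ≥0∞) :=
      (ENNReal.lt_div_iff_mul_lt (Or.inl hnne0) (Or.inl hnnet)).mpr h5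
    have h7 : ENNReal.ofReal (lam₁ + 1) / (n : ℝ≥0∞) = ENNReal.ofReal ((1 + lam₁) / n) := by
      rw [ENNReal.ofReal_div_of_pos (by exact_mod_cast Nat.cast_pos.mpr (by omega : 0 < n))]
      rw [ENNReal.ofReal_natCast]
      congr 2
      ring
    rw [h7] at h6
    have h8 : c < ENNReal.ofReal ((1 + lam₁) / n) - 1 :=
      (ENNReal.cancel_of_ne hne1).lt_tsub_iff_right.mpr h6
    have h9 : ENNReal.ofReal ((1 + lam₁) / n) - 1 = ENNReal.ofReal ((1 + lam₁) / n - 1) := by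
      rw [← ENNReal.ofReal_one, ← ENNReal.ofReal_sub _ zero_le_one]
    rw [h9] at h8
    have hmem : ENNReal.ofReal ((1 + lam₁) / n - 1) ≤ lambdaExp p n ξ := by
      apply le_sSup
      exact ⟨(1 + lam₁) / n - 1, rfl, aux_lift ξ hξ lam₁ n hn hprop⟩
    exact absurd (h8.trans_le hmem) (not_lt_of_ge hc1.le)
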